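/- Let Z be a stochastic process on D with upper semicontinuous trajectories and standard uniform marginal distributions, let (F_s : s ∈ D) be a family of distribution functions with right-continuous quantile functions Q_s(p) = sup{x ∈ ℝ : F_s(x) ≤ p}, and assume that for every p ∈ [0,1] the map s ↦ Q_s(p) is upper semicontinuous. Then the process ξ(s) = Q_s((Z(s) ∨ 0) ∧ 1) has upper semicontinuous trajectories and the marginal distribution of ξ(s) is F_s for every s. -/

import Mathlib

open MeasureTheory Set

/-- Proposition 4.1 (à la Sklar I, sufficiency direction): let `Z` be a process with
upper semicontinuous trajectories and standard uniform margins, let `(F_s)` be a family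
of distribution functions with right-continuous quantile functions
`Q_s(p) = sup{x ∈ ℝ : F_s(x) ≤ p}`, and suppose `s ↦ Q_s(p)` is upper semicontinuous for
every `p ∈ [0,1]`. Then the process `ξ(s) = Q_s((Z(s) ∨ 0) ∧ 1)` has upper
semicontinuous trajectories and the marginal distribution of `ξ(s)` is `F_s`. -/
theorem stmt_19 {N : ℕ} (D : Set (EuclideanSpace ℝ (Fin N))) (hne : D.Nonempty)
    (hlc : LocallyCompactSpace D)
    {Ω : Type*} [MeasurableSpace Ω] (μ : Measure Ω) [IsProbabilityMeasure μ]
    (Z : D → Ω → EReal) (hZmeas : ∀ s : D, Measurable (Z s))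
    (hZusc : ∀ ω : Ω, UpperSemicontinuous (fun s => Z s ω))
    (hZunif : ∀ s : D, ∀ p ∈ Icc (0 : ℝ) 1,
      (μ {ω | Z s ω ≤ (p : EReal)}).toReal = p)
    (F : D → ℝ → ℝ)
    (hFmono : ∀ s : D, Monotone (F s))
    (hFrc : ∀ s : D, ∀ x : ℝ, ContinuousWithinAt (F s) (Ici x) x)
    (hF0 : ∀ s : D, Filter.Tendsto (F s) Filter.atBot (nhds 0))
    (hF1 : ∀ s : D, Filter.Tendsto (F s) Filter.atTop (nhds 1))
    (Q : D → ℝ → EReal)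
    (hQ : ∀ (s : D) (p : ℝ), Q s p = sSup ((fun x : ℝ => (x : EReal)) ''
      {x : ℝ | F s x ≤ p}))
    (hQusc : ∀ p ∈ Icc (0 : ℝ) 1, UpperSemicontinuous (fun s => Q s p))
    (ξ : D → Ω → EReal)
    (hξ : ∀ (s : D) (ω : Ω), ξ s ω = Q s (((Z s ω ⊔ 0) ⊓ 1).toReal)) :
    (∀ ω : Ω, UpperSemicontinuous (fun s => ξ s ω)) ∧
      (∀ (s : D) (x : ℝ), (μ {ω | ξ s ω ≤ (x : EReal)}).toReal = F s x) := by
  classical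
  -- F takes values in [0,1]
  have hF01 : ∀ (s : D) (x : ℝ), F s x ∈ Icc (0 : ℝ) 1 := by
    intro s x
    constructor
    · refine le_of_tendsto (hF0 s) ?_
      exact Filter.eventually_atBot.2 ⟨x, fun y hy => hFmono s hy⟩
    · refine ge_of_tendsto (hF1 s) ?_
      exact Filter.eventually_atTop.2 ⟨x, fun y hy => hFmono s hy⟩
  -- Q is monotone in p
  have hQmono : ∀ (s : D) (p q : ℝ), p ≤ q → Q s p ≤ Q s q := by
    intro s p q hpq
    rw [hQ, hQ]
    exact sSup_le_sSup (image_mono (fun x hx => le_trans hx hpq))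
  -- Galois inequality 1
  have hC1 : ∀ (s : D) (p x : ℝ), p < F s x → Q s p ≤ (x : EReal) := by
    intro s p x hpx
    rw [hQ]
    refine sSup_le ?_
    rintro _ ⟨y, hy, rfl⟩
    rw [EReal.coe_le_coe_iff]
    by_contra hxy
    push_neg at hxy
    exact absurd (le_trans (hFmono s hxy.le) hy) (not_le.2 hpx)
  -- Galois inequality 2
  have hC2 : ∀ (s : D) (p x : ℝ), Q s p ≤ (x : EReal) → p ≤ F s x := by
    intro s p x hqx
    have hgt : ∀ y, x < y → p ≤ F s y := by
      intro y hy
      by_contra hle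
      push_neg at hle
      have h1 : (y : EReal) ≤ Q s p := by
        rw [hQ]; exact le_sSup ⟨y, hle.le, rfl⟩
      have h2 := le_trans h1 hqx
      rw [EReal.coe_le_coe_iff] at h2
      exact absurd h2 (not_le.2 hy)
    have htd : Filter.Tendsto (F s) (nhdsWithin x (Ioi x)) (nhds (F s x)) :=
      (hFrc s x).mono_left (nhdsWithin_mono x Ioi_subset_Ici_self)
    exact ge_of_tendsto htd (Filter.eventually_of_mem self_mem_nhdsWithin (fun y hy => hgt y hy))
  -- right-continuity of Q in p
  have hBrc : ∀ (s : D) (p₀ : ℝ), p₀ < 1 → ∀ y : EReal, Q s p₀ < y →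
      ∃ q : ℝ, p₀ < q ∧ q ≤ 1 ∧ Q s q < y := by
    intro s p₀ hp₀ y hy
    obtain ⟨r, hr1, hr2⟩ := EReal.exists_between_coe_real hy
    by_contra hcon
    push_neg at hcon
    have hFr : F s r ≤ p₀ := by
      by_contra hFgt
      push_neg at hFgt
      obtain ⟨q, hq1, hq2⟩ := exists_between (lt_min hFgt hp₀)
      have hq3 : q ≤ 1 := le_of_lt (lt_of_lt_of_le hq2 (min_le_right _ _))
      have hyq := hcon q hq1 hq3
      have hrq : (r : EReal) < Q s q := lt_of_lt_of_le hr2 hyq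
      rw [hQ] at hrq
      obtain ⟨b, hb, hrb⟩ := lt_sSup_iff.1 hrq
      obtain ⟨z, hz, rfl⟩ := hb
      rw [EReal.coe_lt_coe_iff] at hrb
      have : F s r ≤ q := le_trans (hFmono s hrb.le) hz
      exact absurd this (not_le.2 (lt_of_lt_of_le hq2 (min_le_left _ _)))
    have : (r : EReal) ≤ Q s p₀ := by rw [hQ]; exact le_sSup ⟨r, hFr, rfl⟩
    exact absurd hr1 (not_lt.2 this)
  -- facts about the clamp W
  set W : D → Ω → EReal := fun s ω => (Z s ω ⊔ 0) ⊓ 1 with hWdef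
  have hW0 : ∀ s ω, (0 : EReal) ≤ W s ω := fun s ω => le_inf le_sup_right zero_le_one
  have hW1 : ∀ s ω, W s ω ≤ (1 : EReal) := fun s ω => inf_le_right
  have hWcoe : ∀ s ω, ((W s ω).toReal : EReal) = W s ω := by
    intro s ω
    refine EReal.coe_toReal ?_ ?_
    · exact ne_top_of_le_ne_top (EReal.coe_ne_top 1) (by rw [EReal.coe_one]; exact hW1 s ω)
    · exact fun h => by simpa [h] using hW0 s ω
  have hWmem : ∀ s ω, (W s ω).toReal ∈ Icc (0 : ℝ) 1 := by
    intro s ω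
    constructor
    · rw [← EReal.coe_le_coe_iff, hWcoe]; exact_mod_cast hW0 s ω
    · rw [← EReal.coe_le_coe_iff, hWcoe]; exact_mod_cast hW1 s ω
  -- if W < 1 then Z ≤ W
  have hZleW : ∀ s ω, W s ω < 1 → Z s ω ≤ W s ω := by
    intro s ω h
    have h1 : Z s ω ⊔ 0 < 1 := by
      rcases inf_lt_iff.1 h with h' | h'
      · exact h'
      · exact absurd h' (lt_irrefl _)
    have : W s ω = Z s ω ⊔ 0 := inf_eq_left.2 h1.le
    rw [this]
    exact le_sup_left
  -- clamp bound: Z ≤ t with 0 ≤ t real implies W ≤ t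
  have hWle : ∀ (s : D) (ω : Ω) (t : ℝ), 0 ≤ t → Z s ω ≤ (t : EReal) → W s ω ≤ (t : EReal) := by
    intro s ω t ht hz
    refine inf_le_of_left_le (sup_le hz ?_)
    exact_mod_cast ht
  constructor
  · -- upper semicontinuity of trajectories
    intro ω s₀ y hy
    have hy' : Q s₀ ((Z s₀ ω ⊔ 0) ⊓ 1).toReal < y := by rw [← hξ]; exact hy
    clear hy
    set p₀ := (W s₀ ω).toReal with hp₀def
    have hy : Q s₀ p₀ < y := hy'
    have hp₀ : p₀ ∈ Icc (0 : ℝ) 1 := hWmem s₀ ω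
    rcases lt_or_eq_of_le hp₀.2 with hp₀lt | hp₀eq
    · -- p₀ < 1
      obtain ⟨q, hq1, hq2, hq3⟩ := hBrc s₀ p₀ hp₀lt y hy
      have hq0 : (0 : ℝ) ≤ q := le_of_lt (lt_of_le_of_lt hp₀.1 hq1)
      have hE1 := hQusc q ⟨hq0, hq2⟩ s₀ y hq3
      have hZlt : Z s₀ ω < (q : EReal) := by
        have hWlt1 : W s₀ ω < 1 := by
          rw [← hWcoe s₀ ω]
          calc ((W s₀ ω).toReal : EReal) < (q : EReal) := by exact_mod_cast lt_of_le_of_lt (le_refl p₀) hq1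
            _ ≤ ((1 : ℝ) : EReal) := by exact_mod_cast hq2
            _ = 1 := by norm_cast
        calc Z s₀ ω ≤ W s₀ ω := hZleW s₀ ω hWlt1
          _ = (p₀ : EReal) := (hWcoe s₀ ω).symm
          _ < (q : EReal) := by exact_mod_cast hq1
      have hE2 := hZusc ω s₀ (q : EReal) hZlt
      filter_upwards [hE1, hE2] with s hs1 hs2
      show ξ s ω < y
      rw [hξ]
      have hWq : W s ω ≤ (q : EReal) := hWle s ω q hq0 hs2.le
      have hpq : (W s ω).toReal ≤ q := by
        rw [← EReal.coe_le_coe_iff, hWcoe]; exact hWq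
      exact lt_of_le_of_lt (hQmono s _ q hpq) hs1
    · -- p₀ = 1
      rw [hp₀eq] at hy
      have hE1 := hQusc 1 ⟨zero_le_one, le_refl 1⟩ s₀ y hy
      filter_upwards [hE1] with s hs1
      show ξ s ω < y
      rw [hξ]
      exact lt_of_le_of_lt (hQmono s _ 1 (hWmem s ω).2) hs1
  · -- marginals
    intro s x
    set c := F s x with hcdef
    have hc : c ∈ Icc (0 : ℝ) 1 := hF01 s x
    set E := {ω | ξ s ω ≤ (x : EReal)} with hEdef
    have hup : E ⊆ {ω | (W s ω).toReal ≤ c} := by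
      intro ω h
      have h' : ξ s ω ≤ (x : EReal) := h
      rw [hξ] at h'
      exact hC2 s _ x h'
    have hlo : ∀ t : ℝ, 0 ≤ t → t < c → {ω | Z s ω ≤ (t : EReal)} ⊆ E := by
      intro t ht0 htc ω hzt
      have hWt : (W s ω).toReal ≤ t := by
        rw [← EReal.coe_le_coe_iff, hWcoe]
        exact hWle s ω t ht0 hzt
      have : Q s ((W s ω).toReal) ≤ (x : EReal) := hC1 s _ x (lt_of_le_of_lt hWt htc)
      show ξ s ω ≤ (x : EReal)
      rw [hξ]
      exact this
    have hlower : c ≤ (μ E).toReal := by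
      by_contra hcon
      push_neg at hcon
      obtain ⟨t, ht1, ht2⟩ := exists_between hcon
      have ht0 : (0 : ℝ) ≤ t := le_trans ENNReal.toReal_nonneg ht1.le
      have ht3 : t ≤ 1 := le_trans ht2.le hc.2
      have hsub := hlo t ht0 ht2
      have hmono : (μ {ω | Z s ω ≤ (t : EReal)}).toReal ≤ (μ E).toReal :=
        ENNReal.toReal_mono (measure_ne_top μ E) (measure_mono hsub)
      rw [hZunif s t ⟨ht0, ht3⟩] at hmono
      linarith
    have hupper : (μ E).toReal ≤ c := by
      rcases lt_or_eq_of_le hc.2 with hclt | hceq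
      · -- c < 1
        have hsub : E ⊆ {ω | Z s ω ≤ (c : EReal)} := by
          intro ω h
          have h1 : (W s ω).toReal ≤ c := hup h
          have h2 : W s ω ≤ (c : EReal) := by
            rw [← hWcoe s ω]; exact_mod_cast h1
          have hWlt1 : W s ω < 1 := by
            refine lt_of_le_of_lt h2 ?_
            exact_mod_cast hclt
          exact le_trans (hZleW s ω hWlt1) h2
        have hmono : (μ E).toReal ≤ (μ {ω | Z s ω ≤ (c : EReal)}).toReal :=
          ENNReal.toReal_mono (measure_ne_top μ _) (measure_mono hsub)
        rwa [hZunif s c hc] at hmono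
      · -- c = 1
        rw [hceq]
        calc (μ E).toReal ≤ (μ univ).toReal :=
              ENNReal.toReal_mono (measure_ne_top μ _) (measure_mono (subset_univ _))
          _ = 1 := by rw [measure_univ]; simp
    linarith
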